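/- (Strong subadditivity.) For any sets E₁, E₂ ⊂ Ω, C̃_{BV^{p(·)}}(E₁ ∪ E₂) + C̃_{BV^{p(·)}}(E₁ ∩ E₂) ≤ C̃_{BV^{p(·)}}(E₁) + C̃_{BV^{p(·)}}(E₂). -/

import Mathlib

open MeasureTheory Filter Topology ENNReal Set

noncomputable section

/-- Euclidean space `ℝⁿ`. -/
abbrev Eu (n : ℕ) : Type := EuclideanSpace ℝ (Fin n)

/-- The modular `ρ_{p(·)}(u) = ∫_Ω |u|^{p(x)} dx`. -/
def vModular {n : ℕ} (p : Eu n → ℝ) (Ω : Set (Eu n)) (u : Eu n → ℝ) : ℝ≥0∞ :=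
  ∫⁻ x in Ω, ENNReal.ofReal (|u x| ^ p x)

/-- The gradient modular `∫_Ω |∇u|^{p(x)} dx` (for a.e. differentiable `u`,
`fderiv` is the gradient). -/
def gradModular {n : ℕ} (p : Eu n → ℝ) (Ω : Set (Eu n)) (u : Eu n → ℝ) : ℝ≥0∞ :=
  ∫⁻ x in Ω, ENNReal.ofReal (‖fderiv ℝ u x‖ ^ p x)

/-- Membership in the variable exponent Lebesgue space `L^{p(·)}(Ω)`. -/
def MemLpVar {n : ℕ} (p : Eu n → ℝ) (Ω : Set (Eu n)) (u : Eu n → ℝ) : Prop :=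
  Measurable u ∧ ∃ l : ℝ, 0 < l ∧ vModular p Ω (fun x => u x / l) < ⊤

/-- The Luxemburg norm on `L^{p(·)}(Ω)`. -/
def luxNorm {n : ℕ} (p : Eu n → ℝ) (Ω : Set (Eu n)) (u : Eu n → ℝ) : ℝ :=
  sInf {l : ℝ | 0 < l ∧ vModular p Ω (fun x => u x / l) ≤ 1}

/-- Convergence `v i → u` in `L^{p(·)}(Ω)` (Luxemburg norm convergence). -/
def LpTendsto {n : ℕ} (p : Eu n → ℝ) (Ω : Set (Eu n)) (v : ℕ → Eu n → ℝ)
    (u : Eu n → ℝ) : Prop :=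
  Tendsto (fun i => luxNorm p Ω (fun x => v i x - u x)) atTop (𝓝 0)

/-- `u` is locally Lipschitz on `Ω`. -/
def LocLipOn {n : ℕ} (Ω : Set (Eu n)) (u : Eu n → ℝ) : Prop :=
  ∀ x ∈ Ω, ∃ K : NNReal, ∃ t ∈ 𝓝[Ω] x, LipschitzOnWith K u t

/-- The relaxed mixed pseudo-modular `ρ̃_{BV^{p(·)}(Ω)}(u)`: the infimum of
`liminf_i ∫_Ω |∇u_i|^{p(x)} dx` over all sequences of locally Lipschitz functions
in `L^{p(·)}(Ω)` converging to `u` in `L^{p(·)}(Ω)`. -/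
def bvModular {n : ℕ} (p : Eu n → ℝ) (Ω : Set (Eu n)) (u : Eu n → ℝ) : ℝ≥0∞ :=
  ⨅ (v : ℕ → Eu n → ℝ)
    (_ : (∀ i, LocLipOn Ω (v i) ∧ MemLpVar p Ω (v i)) ∧ LpTendsto p Ω v u),
    Filter.liminf (fun i => gradModular p Ω (v i)) atTop

/-- Membership in the mixed space `B̃V^{p(·)}(Ω)`. -/
def MemBVt {n : ℕ} (p : Eu n → ℝ) (Ω : Set (Eu n)) (u : Eu n → ℝ) : Prop :=
  MemLpVar p Ω u ∧ bvModular p Ω u < ⊤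

/-- The norm `‖u‖_{B̃V^{p(·)}}`. -/
def bvNorm {n : ℕ} (p : Eu n → ℝ) (Ω : Set (Eu n)) (u : Eu n → ℝ) : ℝ :=
  luxNorm p Ω u + sInf {l : ℝ | 0 < l ∧ bvModular p Ω (fun x => u x / l) ≤ 1}

/-- The admissible class `Ã(E)` for the mixed capacity. -/
def admissibleBV {n : ℕ} (p : Eu n → ℝ) (Ω E : Set (Eu n)) : Set (Eu n → ℝ) :=
  {u | MemBVt p Ω u ∧ (∀ x ∈ Ω, 0 ≤ u x ∧ u x ≤ 1) ∧
       ∃ U : Set (Eu n), IsOpen U ∧ E ⊆ U ∧ ∀ x ∈ U ∩ Ω, u x = 1}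

/-- The mixed BV-Sobolev capacity `C̃_{BV^{p(·)}}(E)` (with `inf ∅ = ∞`). -/
def bvCapacity {n : ℕ} (p : Eu n → ℝ) (Ω E : Set (Eu n)) : ℝ≥0∞ :=
  ⨅ (u : Eu n → ℝ) (_ : u ∈ admissibleBV p Ω E), vModular p Ω u + bvModular p Ω u

/-- Divergence of a vector field. -/
def divg {n : ℕ} (φ : Eu n → Eu n) (x : Eu n) : ℝ :=
  ∑ i, fderiv ℝ φ x (EuclideanSpace.single i 1) i

/-- Total variation `‖Du‖(U)` on an open set `U`, via the defining supremum over
`C¹` vector fields compactly supported in `U` with `|φ| ≤ 1`. -/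
def totVarOpen {n : ℕ} (U : Set (Eu n)) (u : Eu n → ℝ) : ℝ≥0∞ :=
  ⨆ (φ : Eu n → Eu n)
    (_ : ContDiff ℝ 1 φ ∧ HasCompactSupport φ ∧ tsupport φ ⊆ U ∧ ∀ x, ‖φ x‖ ≤ 1),
    ENNReal.ofReal (∫ x in U, u x * divg φ x)

/-- Total variation `‖Du‖(A)` of a set `A ⊆ Ω`, extended from open sets. -/
def totVarIn {n : ℕ} (Ω A : Set (Eu n)) (u : Eu n → ℝ) : ℝ≥0∞ :=
  ⨅ (U : Set (Eu n)) (_ : IsOpen U ∧ A ⊆ U ∧ U ⊆ Ω), totVarOpen U u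

/-- `g` is the weak (distributional) gradient of `u` on `Ω`. -/
def IsWeakGrad {n : ℕ} (Ω : Set (Eu n)) (u : Eu n → ℝ) (g : Eu n → Eu n) : Prop :=
  ∀ φ : Eu n → ℝ, ContDiff ℝ 1 φ → HasCompactSupport φ → tsupport φ ⊆ Ω →
    ∀ i : Fin n,
      (∫ x in Ω, u x * (fderiv ℝ φ x (EuclideanSpace.single i 1))) =
        - ∫ x in Ω, g x i * φ x

/-- The Harjulehto–Hästö–Latvala mixed pseudo-modular
`ρ_{BV^{p(·)}(F)}(u) = ‖Du‖(F ∩ Y) + ∫_{F∖Y} |∇u|^{p(x)} dx`, where `Y = {p = 1}`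
and `g` is the weak gradient of `u` on the Sobolev part. -/
def hhlModular {n : ℕ} (p : Eu n → ℝ) (Ω F : Set (Eu n)) (u : Eu n → ℝ)
    (g : Eu n → Eu n) : ℝ≥0∞ :=
  totVarIn Ω (F ∩ {x | p x = 1}) u +
    ∫⁻ x in F \ {x | p x = 1}, ENNReal.ofReal (‖g x‖ ^ p x)

/-- The HHL mixed pseudo-modular for (smooth) functions whose gradient is `fderiv`. -/
def hhlModularSmooth {n : ℕ} (p : Eu n → ℝ) (Ω F : Set (Eu n)) (v : Eu n → ℝ) : ℝ≥0∞ :=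
  totVarIn Ω (F ∩ {x | p x = 1}) v +
    ∫⁻ x in F \ {x | p x = 1}, ENNReal.ofReal (‖fderiv ℝ v x‖ ^ p x)

/-- Membership in the HHL space `BV^{p(·)}(Ω)`: `u ∈ L^{p(·)}(Ω)` and
`inf{λ > 0 : ρ_{BV^{p(·)}(Ω)}(u/λ) ≤ 1} < ∞`. -/
def MemBVp {n : ℕ} (p : Eu n → ℝ) (Ω : Set (Eu n)) (u : Eu n → ℝ) : Prop :=
  MemLpVar p Ω u ∧
    ∃ g : Eu n → Eu n, IsWeakGrad (Ω \ {x | p x = 1}) u g ∧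
      ∃ l : ℝ, 0 < l ∧
        hhlModular p Ω Ω (fun x => u x / l) (fun x => l⁻¹ • g x) ≤ 1

/-- Mollification `u_δ = φ_δ ∗ u` (with `u` extended by zero outside `Ω`),
where `φ_δ(z) = δ^{-n} φ(z/δ)`. -/
def mollify {n : ℕ} (Ω : Set (Eu n)) (u : Eu n → ℝ) (φ : Eu n → ℝ) (δ : ℝ)
    (x : Eu n) : ℝ :=
  ∫ y in Ω, (δ ^ n)⁻¹ * φ (δ⁻¹ • (x - y)) * u y

/-- `p` is (locally) log-Hölder continuous on `Ω` with constant `c`. -/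
def LogHolderOn {n : ℕ} (c : ℝ) (Ω : Set (Eu n)) (p : Eu n → ℝ) : Prop :=
  ∀ x ∈ Ω, ∀ y ∈ Ω, |p x - p y| ≤ c / Real.log (Real.exp 1 + 1 / dist x y)

/-- `p` is globally log-Hölder continuous on `ℝⁿ` with constant `c`. -/
def LogHolderGlobal {n : ℕ} (c : ℝ) (p : Eu n → ℝ) : Prop :=
  LogHolderOn c Set.univ p ∧
    ∃ pinf : ℝ, 1 ≤ pinf ∧ ∀ x, |p x - pinf| ≤ c / Real.log (Real.exp 1 + ‖x‖)

/-- The variable exponent Sobolev capacity `C_{p(·)}(E)`: infimum of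
`∫ |u|^{p(x)} + |∇u|^{p(x)} dx` over `u ∈ W^{1,p(·)}(ℝⁿ)` with `u ≥ 1` on an
open set containing `E`. -/
def sobolevCapacity {n : ℕ} (p : Eu n → ℝ) (E : Set (Eu n)) : ℝ≥0∞ :=
  ⨅ (u : Eu n → ℝ) (g : Eu n → Eu n)
    (_ : MemLpVar p Set.univ u ∧ IsWeakGrad Set.univ u g ∧
         MemLpVar p Set.univ (fun x => ‖g x‖) ∧
         ∃ U : Set (Eu n), IsOpen U ∧ E ⊆ U ∧ ∀ x ∈ U, 1 ≤ u x),
    vModular p Set.univ u + ∫⁻ x, ENNReal.ofReal (‖g x‖ ^ p x)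

section AuxLemmas

open Filter MeasureTheory

variable {n : ℕ} {p : Eu n → ℝ} {Ω : Set (Eu n)}

lemma abs_sub_le' (a b : ℝ) : |a - b| ≤ |a| + |b| := by
  rw [sub_eq_add_neg]
  exact (abs_add_le _ _).trans (by rw [abs_neg])

lemma abs_max_le' (a b : ℝ) : |max a b| ≤ |a| + |b| := by
  rcases le_total a b with h | h
  · rw [max_eq_right h]; nlinarith [abs_nonneg a]
  · rw [max_eq_left h]; nlinarith [abs_nonneg b]

lemma abs_min_le' (a b : ℝ) : |min a b| ≤ |a| + |b| := by
  rcases le_total a b with h | h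
  · rw [min_eq_left h]; nlinarith [abs_nonneg b]
  · rw [min_eq_right h]; nlinarith [abs_nonneg a]

lemma luxNorm_nonneg (u : Eu n → ℝ) : 0 ≤ luxNorm p Ω u := by
  apply Real.sInf_nonneg
  rintro l ⟨hl, -⟩
  exact hl.le

lemma modular_convex (hΩ : MeasurableSet Ω) (hpm : Measurable p)
    (hp1 : ∀ x ∈ Ω, 1 ≤ p x) {f g h : Eu n → ℝ}
    (hf : Measurable f) (hg : Measurable g)
    (hdom : ∀ x, |h x| ≤ |f x| + |g x|) {a b : ℝ} (ha : 0 < a) (hb : 0 < b) :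
    vModular p Ω (fun x => h x / (a + b)) ≤
      ENNReal.ofReal (a / (a + b)) * vModular p Ω (fun x => f x / a) +
      ENNReal.ofReal (b / (a + b)) * vModular p Ω (fun x => g x / b) := by
  have hab : 0 < a + b := by linarith
  have hmf : Measurable fun x => ENNReal.ofReal (|f x / a| ^ p x) :=
    ((hf.div_const a).abs.pow hpm).ennreal_ofReal
  have hmg : Measurable fun x => ENNReal.ofReal (|g x / b| ^ p x) :=
    ((hg.div_const b).abs.pow hpm).ennreal_ofReal
  unfold vModular
  calc (∫⁻ x in Ω, ENNReal.ofReal (|h x / (a + b)| ^ p x))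
      ≤ ∫⁻ x in Ω, (ENNReal.ofReal (a / (a + b)) * ENNReal.ofReal (|f x / a| ^ p x)
          + ENNReal.ofReal (b / (a + b)) * ENNReal.ofReal (|g x / b| ^ p x)) := by
        apply lintegral_mono_ae
        rw [ae_restrict_iff' hΩ]
        refine ae_of_all _ fun x hx => ?_
        have hp := hp1 x hx
        have hp0 : (0:ℝ) ≤ p x := by linarith
        set θ : ℝ := a / (a + b) with hθdef
        set μ : ℝ := b / (a + b) with hμdef
        have hθ0 : 0 ≤ θ := by positivity
        have hμ0 : 0 ≤ μ := by positivity
        have hθμ : θ + μ = 1 := by rw [hθdef, hμdef, ← add_div, div_self hab.ne']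
        have hXf : (0:ℝ) ≤ |f x| / a := by positivity
        have hXg : (0:ℝ) ≤ |g x| / b := by positivity
        have e1 : |h x / (a + b)| = |h x| / (a + b) := by
          rw [abs_div, abs_of_pos hab]
        have e2 : |f x / a| = |f x| / a := by rw [abs_div, abs_of_pos ha]
        have e3 : |g x / b| = |g x| / b := by rw [abs_div, abs_of_pos hb]
        have key : |h x / (a + b)| ^ p x ≤
            θ * (|f x| / a) ^ p x + μ * (|g x| / b) ^ p x := by
          have hsum : θ * (|f x| / a) + μ * (|g x| / b) = (|f x| + |g x|) / (a + b) := by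
            rw [hθdef, hμdef]; field_simp
          have mono : |h x / (a + b)| ^ p x ≤
              (θ * (|f x| / a) + μ * (|g x| / b)) ^ p x := by
            apply Real.rpow_le_rpow (abs_nonneg _) _ hp0
            rw [e1, hsum]
            gcongr
            exact hdom x
          have cvx := (convexOn_rpow hp).2 (Set.mem_Ici.2 hXf) (Set.mem_Ici.2 hXg)
            hθ0 hμ0 hθμ
          simp only [smul_eq_mul] at cvx ⊢
          exact mono.trans cvx
        calc ENNReal.ofReal (|h x / (a + b)| ^ p x)
            ≤ ENNReal.ofReal (θ * (|f x| / a) ^ p x + μ * (|g x| / b) ^ p x) :=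
              ENNReal.ofReal_le_ofReal key
          _ = ENNReal.ofReal (θ * (|f x| / a) ^ p x)
              + ENNReal.ofReal (μ * (|g x| / b) ^ p x) := by
              rw [ENNReal.ofReal_add (by positivity) (by positivity)]
          _ = ENNReal.ofReal θ * ENNReal.ofReal (|f x / a| ^ p x)
              + ENNReal.ofReal μ * ENNReal.ofReal (|g x / b| ^ p x) := by
              rw [ENNReal.ofReal_mul hθ0, ENNReal.ofReal_mul hμ0, e2, e3]
    _ = ENNReal.ofReal (a / (a + b)) * (∫⁻ x in Ω, ENNReal.ofReal (|f x / a| ^ p x))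
        + ENNReal.ofReal (b / (a + b)) * (∫⁻ x in Ω, ENNReal.ofReal (|g x / b| ^ p x)) := by
        rw [lintegral_add_left (hmf.const_mul _), lintegral_const_mul _ hmf,
          lintegral_const_mul _ hmg]

lemma memLpVar_dom (hΩ : MeasurableSet Ω) (hpm : Measurable p)
    (hp1 : ∀ x ∈ Ω, 1 ≤ p x) {f g h : Eu n → ℝ}
    (hf : MemLpVar p Ω f) (hg : MemLpVar p Ω g)
    (hh : Measurable h) (hdom : ∀ x, |h x| ≤ |f x| + |g x|) :
    MemLpVar p Ω h := by
  obtain ⟨hfm, a, ha, hfa⟩ := hf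
  obtain ⟨hgm, b, hb, hgb⟩ := hg
  refine ⟨hh, a + b, by linarith, ?_⟩
  refine lt_of_le_of_lt (modular_convex hΩ hpm hp1 hfm hgm hdom ha hb) ?_
  exact ENNReal.add_lt_top.2
    ⟨ENNReal.mul_lt_top ENNReal.ofReal_lt_top hfa,
     ENNReal.mul_lt_top ENNReal.ofReal_lt_top hgb⟩

lemma exists_modular_le_one (hΩ : MeasurableSet Ω) (hpm : Measurable p)
    (hp1 : ∀ x ∈ Ω, 1 ≤ p x) {h : Eu n → ℝ} (hmem : MemLpVar p Ω h) :
    ∃ l, 0 < l ∧ vModular p Ω (fun x => h x / l) ≤ 1 := by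
  obtain ⟨hm, l₀, hl₀, hfin⟩ := hmem
  obtain ⟨k, hk⟩ := ENNReal.exists_nat_gt hfin.ne
  refine ⟨l₀ * (k + 1), by positivity, ?_⟩
  have hmeas : Measurable fun x => ENNReal.ofReal (|h x / l₀| ^ p x) :=
    ((hm.div_const l₀).abs.pow hpm).ennreal_ofReal
  have hk1 : (0:ℝ) < (k:ℝ) + 1 := by positivity
  have key : vModular p Ω (fun x => h x / (l₀ * (k + 1))) ≤
      ENNReal.ofReal (1 / ((k:ℝ) + 1)) * vModular p Ω (fun x => h x / l₀) := by
    unfold vModular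
    rw [← lintegral_const_mul _ hmeas]
    apply lintegral_mono_ae
    rw [ae_restrict_iff' hΩ]
    refine ae_of_all _ fun x hx => ?_
    have hp := hp1 x hx
    have e : |h x / (l₀ * ((k:ℝ) + 1))| = (1 / ((k:ℝ) + 1)) * |h x / l₀| := by
      rw [abs_div, abs_div, abs_of_pos hl₀, abs_of_pos (by positivity : (0:ℝ) < l₀ * ((k:ℝ)+1))]
      field_simp
    rw [e, Real.mul_rpow (by positivity) (abs_nonneg _),
      ENNReal.ofReal_mul (by positivity)]
    apply mul_le_mul_left
    apply ENNReal.ofReal_le_ofReal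
    calc (1 / ((k:ℝ) + 1)) ^ p x ≤ (1 / ((k:ℝ) + 1)) ^ (1:ℝ) :=
          Real.rpow_le_rpow_of_exponent_ge (by positivity)
            (by rw [div_le_one hk1]; linarith) hp
      _ = 1 / ((k:ℝ) + 1) := Real.rpow_one _
  refine key.trans ?_
  calc ENNReal.ofReal (1 / ((k:ℝ) + 1)) * vModular p Ω (fun x => h x / l₀)
      ≤ ENNReal.ofReal (1 / ((k:ℝ) + 1)) * ENNReal.ofReal ((k:ℝ) + 1) := by
        apply mul_le_mul_right
        refine le_trans hk.le ?_
        rw [ENNReal.ofReal_add (by positivity) zero_le_one, ENNReal.ofReal_natCast,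
          ENNReal.ofReal_one]
        exact le_self_add
    _ = ENNReal.ofReal ((1 / ((k:ℝ) + 1)) * ((k:ℝ) + 1)) := by
        rw [ENNReal.ofReal_mul (by positivity)]
    _ = 1 := by rw [one_div_mul_cancel hk1.ne', ENNReal.ofReal_one]

end AuxLemmas

section AuxLemmas2

open Filter MeasureTheory

variable {n : ℕ} {p : Eu n → ℝ} {Ω : Set (Eu n)}

lemma ae_differentiableAt_of_locLip (hΩ : IsOpen Ω) {v : Eu n → ℝ} (hv : LocLipOn Ω v) :
    ∀ᵐ x ∂((volume : Measure (Eu n)).restrict Ω), DifferentiableAt ℝ v x := by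
  rw [ae_restrict_iff' hΩ.measurableSet, ae_iff]
  have hset : {x | ¬ (x ∈ Ω → DifferentiableAt ℝ v x)} =
      {x | x ∈ Ω ∧ ¬ DifferentiableAt ℝ v x} := by
    ext x; simp [Classical.not_imp]
  rw [hset]
  apply measure_null_of_locally_null
  rintro x ⟨hxΩ, -⟩
  obtain ⟨K, t, ht, hlip⟩ := hv x hxΩ
  rw [hΩ.nhdsWithin_eq hxΩ] at ht
  set s := interior t with hsdef
  have hs : IsOpen s := isOpen_interior
  have hxs : x ∈ s := mem_interior_iff_mem_nhds.2 ht
  have hlip' : LipschitzOnWith K v s := hlip.mono interior_subset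
  have hae := hlip'.ae_differentiableWithinAt_of_mem (μ := (volume : Measure (Eu n)))
  rw [ae_iff] at hae
  refine ⟨s ∩ {y | y ∈ Ω ∧ ¬ DifferentiableAt ℝ v y},
    Filter.inter_mem (mem_nhdsWithin_of_mem_nhds (hs.mem_nhds hxs)) self_mem_nhdsWithin, ?_⟩
  apply measure_mono_null _ hae
  rintro y ⟨hys, -, hynd⟩
  simp only [Set.mem_setOf_eq, Classical.not_imp]
  exact ⟨hys, fun hdw => hynd (hdw.differentiableAt (hs.mem_nhds hys))⟩

lemma fderiv_eq_of_le_of_eq {f g : Eu n → ℝ} {x : Eu n}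
    (hf : DifferentiableAt ℝ f x) (hg : DifferentiableAt ℝ g x)
    (hle : ∀ y, f y ≤ g y) (hxx : g x = f x) :
    fderiv ℝ f x = fderiv ℝ g x := by
  have hmin : IsLocalMin (fun y => g y - f y) x := by
    refine Filter.Eventually.of_forall fun y => ?_
    simp only [hxx, sub_self]
    exact sub_nonneg.2 (hle y)
  have h0 : fderiv ℝ (fun y => g y - f y) x = 0 := hmin.fderiv_eq_zero
  rw [fderiv_fun_sub hg hf] at h0
  exact (sub_eq_zero.1 h0).symm

lemma gradModular_max_min (hΩ : IsOpen Ω) (hpm : Measurable p)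
    (hp1 : ∀ x ∈ Ω, 1 ≤ p x)
    {v w : Eu n → ℝ} (hv : LocLipOn Ω v) (hw : LocLipOn Ω w) :
    gradModular p Ω (fun x => max (v x) (w x)) +
      gradModular p Ω (fun x => min (v x) (w x)) ≤
      gradModular p Ω v + gradModular p Ω w := by
  have hmeas : ∀ u : Eu n → ℝ,
      Measurable fun x => ENNReal.ofReal (‖fderiv ℝ u x‖ ^ p x) := fun u =>
    ((measurable_fderiv ℝ u).norm.pow hpm).ennreal_ofReal
  unfold gradModular
  rw [← lintegral_add_left (hmeas _), ← lintegral_add_left (hmeas v)]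
  apply lintegral_mono_ae
  filter_upwards [ae_differentiableAt_of_locLip hΩ hv, ae_differentiableAt_of_locLip hΩ hw,
    (ae_restrict_iff' hΩ.measurableSet).2 (ae_of_all _ fun x hx => hp1 x hx)]
    with x hdv hdw hp
  have hp0 : p x ≠ 0 := by linarith
  have hzero : ∀ u : Eu n → ℝ, ¬ DifferentiableAt ℝ u x →
      ENNReal.ofReal (‖fderiv ℝ u x‖ ^ p x) = 0 := by
    intro u hu
    rw [fderiv_zero_of_not_differentiableAt hu]
    simp [Real.zero_rpow hp0]
  rcases le_total (w x) (v x) with hc | hc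
  · have t1 : ENNReal.ofReal (‖fderiv ℝ (fun y => max (v y) (w y)) x‖ ^ p x) ≤
        ENNReal.ofReal (‖fderiv ℝ v x‖ ^ p x) := by
      by_cases hd : DifferentiableAt ℝ (fun y => max (v y) (w y)) x
      · rw [← fderiv_eq_of_le_of_eq hdv hd (fun y => le_max_left _ _) (max_eq_left hc)]
      · rw [hzero _ hd]; exact zero_le
    have t2 : ENNReal.ofReal (‖fderiv ℝ (fun y => min (v y) (w y)) x‖ ^ p x) ≤
        ENNReal.ofReal (‖fderiv ℝ w x‖ ^ p x) := by
      by_cases hd : DifferentiableAt ℝ (fun y => min (v y) (w y)) x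
      · rw [fderiv_eq_of_le_of_eq hd hdw (fun y => min_le_right _ _) (min_eq_right hc).symm]
      · rw [hzero _ hd]; exact zero_le
    exact add_le_add t1 t2
  · have t1 : ENNReal.ofReal (‖fderiv ℝ (fun y => max (v y) (w y)) x‖ ^ p x) ≤
        ENNReal.ofReal (‖fderiv ℝ w x‖ ^ p x) := by
      by_cases hd : DifferentiableAt ℝ (fun y => max (v y) (w y)) x
      · rw [← fderiv_eq_of_le_of_eq hdw hd (fun y => le_max_right _ _) (max_eq_right hc)]
      · rw [hzero _ hd]; exact zero_le
    have t2 : ENNReal.ofReal (‖fderiv ℝ (fun y => min (v y) (w y)) x‖ ^ p x) ≤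
        ENNReal.ofReal (‖fderiv ℝ v x‖ ^ p x) := by
      by_cases hd : DifferentiableAt ℝ (fun y => min (v y) (w y)) x
      · rw [fderiv_eq_of_le_of_eq hd hdv (fun y => min_le_left _ _) (min_eq_left hc).symm]
      · rw [hzero _ hd]; exact zero_le
    calc ENNReal.ofReal (‖fderiv ℝ (fun y => max (v y) (w y)) x‖ ^ p x) +
          ENNReal.ofReal (‖fderiv ℝ (fun y => min (v y) (w y)) x‖ ^ p x)
        ≤ ENNReal.ofReal (‖fderiv ℝ w x‖ ^ p x) + ENNReal.ofReal (‖fderiv ℝ v x‖ ^ p x) :=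
          add_le_add t1 t2
      _ = _ := add_comm _ _

lemma locLipOn_max {v w : Eu n → ℝ} (hv : LocLipOn Ω v) (hw : LocLipOn Ω w) :
    LocLipOn Ω (fun x => max (v x) (w x)) := by
  intro x hx
  obtain ⟨K₁, t₁, ht₁, h₁⟩ := hv x hx
  obtain ⟨K₂, t₂, ht₂, h₂⟩ := hw x hx
  refine ⟨K₁ + K₂, t₁ ∩ t₂, Filter.inter_mem ht₁ ht₂, ?_⟩
  rw [lipschitzOnWith_iff_dist_le_mul]
  intro y hy z hz
  have e1 := (lipschitzOnWith_iff_dist_le_mul.1 h₁) y hy.1 z hz.1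
  have e2 := (lipschitzOnWith_iff_dist_le_mul.1 h₂) y hy.2 z hz.2
  have hd : dist (max (v y) (w y)) (max (v z) (w z)) ≤
      max (dist (v y) (v z)) (dist (w y) (w z)) := by
    rw [Real.dist_eq, Real.dist_eq, Real.dist_eq]
    exact abs_max_sub_max_le_max _ _ _ _
  have hcast : ((K₁ + K₂ : NNReal) : ℝ) = (K₁ : ℝ) + (K₂ : ℝ) := by push_cast; ring
  rw [hcast]
  refine hd.trans (max_le ?_ ?_)
  · nlinarith [(dist_nonneg : (0:ℝ) ≤ dist y z), K₂.coe_nonneg]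
  · nlinarith [(dist_nonneg : (0:ℝ) ≤ dist y z), K₁.coe_nonneg]

lemma locLipOn_min {v w : Eu n → ℝ} (hv : LocLipOn Ω v) (hw : LocLipOn Ω w) :
    LocLipOn Ω (fun x => min (v x) (w x)) := by
  intro x hx
  obtain ⟨K₁, t₁, ht₁, h₁⟩ := hv x hx
  obtain ⟨K₂, t₂, ht₂, h₂⟩ := hw x hx
  refine ⟨K₁ + K₂, t₁ ∩ t₂, Filter.inter_mem ht₁ ht₂, ?_⟩
  rw [lipschitzOnWith_iff_dist_le_mul]
  intro y hy z hz
  have e1 := (lipschitzOnWith_iff_dist_le_mul.1 h₁) y hy.1 z hz.1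
  have e2 := (lipschitzOnWith_iff_dist_le_mul.1 h₂) y hy.2 z hz.2
  have hd : dist (min (v y) (w y)) (min (v z) (w z)) ≤
      max (dist (v y) (v z)) (dist (w y) (w z)) := by
    rw [Real.dist_eq, Real.dist_eq, Real.dist_eq]
    exact abs_min_sub_min_le_max _ _ _ _
  have hcast : ((K₁ + K₂ : NNReal) : ℝ) = (K₁ : ℝ) + (K₂ : ℝ) := by push_cast; ring
  rw [hcast]
  refine hd.trans (max_le ?_ ?_)
  · nlinarith [(dist_nonneg : (0:ℝ) ≤ dist y z), K₂.coe_nonneg]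
  · nlinarith [(dist_nonneg : (0:ℝ) ≤ dist y z), K₁.coe_nonneg]

lemma vModular_max_min (hpm : Measurable p) {u₁ u₂ : Eu n → ℝ}
    (h₁ : Measurable u₁) (h₂ : Measurable u₂) :
    vModular p Ω (fun x => max (u₁ x) (u₂ x)) + vModular p Ω (fun x => min (u₁ x) (u₂ x)) =
      vModular p Ω u₁ + vModular p Ω u₂ := by
  have hm1 : Measurable fun x => ENNReal.ofReal (|max (u₁ x) (u₂ x)| ^ p x) :=
    ((h₁.max h₂).abs.pow hpm).ennreal_ofReal
  have hm2 : Measurable fun x => ENNReal.ofReal (|u₁ x| ^ p x) :=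
    (h₁.abs.pow hpm).ennreal_ofReal
  unfold vModular
  rw [← lintegral_add_left hm1, ← lintegral_add_left hm2]
  apply lintegral_congr
  intro x
  beta_reduce
  rcases le_total (u₁ x) (u₂ x) with h | h
  · rw [max_eq_right h, min_eq_left h, add_comm]
  · rw [max_eq_left h, min_eq_right h]

lemma liminf_add_le_of_sum_le {x y : ℕ → ℝ≥0∞} {C : ℝ≥0∞} (hC : C ≠ ⊤)
    (h : ∀ k, x k + y k ≤ C) :
    liminf x atTop + liminf y atTop ≤ C := by
  have hx : limsup x atTop ≤ C :=
    limsup_le_of_le isCobounded_le_of_bot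
      (Eventually.of_forall fun k => le_trans le_self_add (h k))
  have hy : liminf y atTop ≤ liminf (fun k => C - x k) atTop := by
    apply liminf_le_liminf (Eventually.of_forall fun k =>
      ENNReal.le_sub_of_add_le_left (ne_top_of_le_ne_top hC (le_trans le_self_add (h k))) (h k))

  rw [ENNReal.liminf_const_sub atTop x hC] at hy
  calc liminf x atTop + liminf y atTop ≤ limsup x atTop + (C - limsup x atTop) :=
        add_le_add (liminf_le_limsup isBounded_le_of_top isBounded_ge_of_bot) hy
    _ = C := add_tsub_cancel_of_le hx

lemma lpTendsto_dom (hΩ : MeasurableSet Ω) (hpm : Measurable p)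
    (hp1 : ∀ x ∈ Ω, 1 ≤ p x)
    {F G H : ℕ → Eu n → ℝ}
    (hdom : ∀ k x, |H k x| ≤ |F k x| + |G k x|)
    (hFm : ∀ k, Measurable (F k)) (hGm : ∀ k, Measurable (G k))
    (hFS : ∀ k, ∃ l, 0 < l ∧ vModular p Ω (fun x => F k x / l) ≤ 1)
    (hGS : ∀ k, ∃ l, 0 < l ∧ vModular p Ω (fun x => G k x / l) ≤ 1)
    (hF : Tendsto (fun k => luxNorm p Ω (F k)) atTop (𝓝 0))
    (hG : Tendsto (fun k => luxNorm p Ω (G k)) atTop (𝓝 0)) :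
    Tendsto (fun k => luxNorm p Ω (H k)) atTop (𝓝 0) := by
  rw [tendsto_order]
  constructor
  · intro a ha
    exact Eventually.of_forall fun k => lt_of_lt_of_le ha (luxNorm_nonneg _)
  · intro ε hε
    filter_upwards [hF.eventually_lt_const (half_pos hε), hG.eventually_lt_const (half_pos hε)]
      with k hk1 hk2
    obtain ⟨l₁, hl₁, hS₁⟩ := hFS k
    obtain ⟨l₂, hl₂, hS₂⟩ := hGS k
    have hbdd : ∀ A : Set ℝ, (∀ l ∈ A, (0:ℝ) < l) → BddBelow A := fun A hA =>
      ⟨0, fun y hy => (hA y hy).le⟩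
    simp only [luxNorm] at hk1 hk2
    have hne₁ : Set.Nonempty {l : ℝ | 0 < l ∧ vModular p Ω (fun x => F k x / l) ≤ 1} :=
      ⟨l₁, hl₁, hS₁⟩
    have hne₂ : Set.Nonempty {l : ℝ | 0 < l ∧ vModular p Ω (fun x => G k x / l) ≤ 1} :=
      ⟨l₂, hl₂, hS₂⟩
    obtain ⟨a, haS, ha⟩ := (csInf_lt_iff (hbdd _ fun l hl => hl.1) hne₁).1 hk1
    obtain ⟨b, hbS, hb⟩ := (csInf_lt_iff (hbdd _ fun l hl => hl.1) hne₂).1 hk2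
    have hab : (0:ℝ) < a + b := by linarith [haS.1, hbS.1]
    have hmem : 0 < a + b ∧ vModular p Ω (fun x => H k x / (a + b)) ≤ 1 := by
      refine ⟨hab, ?_⟩
      calc vModular p Ω (fun x => H k x / (a + b))
          ≤ ENNReal.ofReal (a / (a + b)) * vModular p Ω (fun x => F k x / a) +
            ENNReal.ofReal (b / (a + b)) * vModular p Ω (fun x => G k x / b) :=
            modular_convex hΩ hpm hp1 (hFm k) (hGm k) (hdom k) haS.1 hbS.1
        _ ≤ ENNReal.ofReal (a / (a + b)) * 1 + ENNReal.ofReal (b / (a + b)) * 1 :=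
            add_le_add (mul_le_mul_right haS.2 _) (mul_le_mul_right hbS.2 _)
        _ = 1 := by
            rw [mul_one, mul_one,
              ← ENNReal.ofReal_add (div_nonneg haS.1.le hab.le) (div_nonneg hbS.1.le hab.le),
              ← add_div, div_self hab.ne', ENNReal.ofReal_one]
    have hle : luxNorm p Ω (H k) ≤ a + b :=
      csInf_le (hbdd _ fun l hl => hl.1) hmem
    calc luxNorm p Ω (H k) ≤ a + b := hle
      _ < ε / 2 + ε / 2 := add_lt_add ha hb
      _ = ε := add_halves ε

end AuxLemmas2

section AuxLemmas3

open Filter MeasureTheory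

variable {n : ℕ} {p : Eu n → ℝ} {Ω : Set (Eu n)}

lemma bvModular_max_min (hΩ : IsOpen Ω) (hpm : Measurable p) (hp1 : ∀ x ∈ Ω, 1 ≤ p x)
    {u₁ u₂ : Eu n → ℝ} (hu₁ : MemLpVar p Ω u₁) (hu₂ : MemLpVar p Ω u₂) :
    bvModular p Ω (fun x => max (u₁ x) (u₂ x)) + bvModular p Ω (fun x => min (u₁ x) (u₂ x)) ≤
      bvModular p Ω u₁ + bvModular p Ω u₂ := by
  apply ENNReal.le_of_forall_pos_le_add
  intro ε hε hfin
  have h1t : bvModular p Ω u₁ ≠ ⊤ := ne_top_of_le_ne_top hfin.ne le_self_add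
  have h2t : bvModular p Ω u₂ ≠ ⊤ := ne_top_of_le_ne_top hfin.ne le_add_self
  have hεne : ((ε : ℝ≥0∞) / 2) ≠ 0 := by
    simp [ENNReal.div_eq_zero_iff, ENNReal.coe_ne_zero.2 hε.ne']
  have hεtop : ((ε : ℝ≥0∞) / 2) ≠ ⊤ := ne_top_of_le_ne_top ENNReal.coe_ne_top
    ENNReal.half_le_self
  set c₁ := bvModular p Ω u₁ + (ε : ℝ≥0∞) / 2 with hc₁
  set c₂ := bvModular p Ω u₂ + (ε : ℝ≥0∞) / 2 with hc₂
  have hc₁t : c₁ ≠ ⊤ := ENNReal.add_ne_top.2 ⟨h1t, hεtop⟩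
  have hc₂t : c₂ ≠ ⊤ := ENNReal.add_ne_top.2 ⟨h2t, hεtop⟩
  have hlt₁ : bvModular p Ω u₁ < c₁ := ENNReal.lt_add_right h1t hεne
  have hlt₂ : bvModular p Ω u₂ < c₂ := ENNReal.lt_add_right h2t hεne
  rw [show bvModular p Ω u₁ = ⨅ (v : ℕ → Eu n → ℝ)
      (_ : (∀ i, LocLipOn Ω (v i) ∧ MemLpVar p Ω (v i)) ∧ LpTendsto p Ω v u₁),
      Filter.liminf (fun i => gradModular p Ω (v i)) atTop from rfl,
    iInf_lt_iff] at hlt₁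
  obtain ⟨v, hv⟩ := hlt₁
  rw [iInf_lt_iff] at hv
  obtain ⟨hvA, hv1⟩ := hv
  rw [show bvModular p Ω u₂ = ⨅ (w : ℕ → Eu n → ℝ)
      (_ : (∀ i, LocLipOn Ω (w i) ∧ MemLpVar p Ω (w i)) ∧ LpTendsto p Ω w u₂),
      Filter.liminf (fun i => gradModular p Ω (w i)) atTop from rfl,
    iInf_lt_iff] at hlt₂
  obtain ⟨w, hw⟩ := hlt₂
  rw [iInf_lt_iff] at hw
  obtain ⟨hwA, hw1⟩ := hw
  obtain ⟨φ, hφmono, hφ⟩ := extraction_of_frequently_atTop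
    (frequently_lt_of_liminf_lt isCobounded_ge_of_top hv1)
  obtain ⟨ψ, hψmono, hψ⟩ := extraction_of_frequently_atTop
    (frequently_lt_of_liminf_lt isCobounded_ge_of_top hw1)
  set V : ℕ → Eu n → ℝ := fun k => v (φ k) with hV
  set W : ℕ → Eu n → ℝ := fun k => w (ψ k) with hW
  have hVlip : ∀ k, LocLipOn Ω (V k) := fun k => (hvA.1 (φ k)).1
  have hWlip : ∀ k, LocLipOn Ω (W k) := fun k => (hwA.1 (ψ k)).1
  have hVlp : ∀ k, MemLpVar p Ω (V k) := fun k => (hvA.1 (φ k)).2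
  have hWlp : ∀ k, MemLpVar p Ω (W k) := fun k => (hwA.1 (ψ k)).2
  set MX : ℕ → Eu n → ℝ := fun k x => max (V k x) (W k x) with hMX
  set MN : ℕ → Eu n → ℝ := fun k x => min (V k x) (W k x) with hMN
  have hΩm := hΩ.measurableSet
  have hmaxsub : ∀ (a b c d : ℝ), |max a b - max c d| ≤ |a - c| + |b - d| := fun a b c d =>
    (abs_max_sub_max_le_max _ _ _ _).trans
      (max_le (le_add_of_nonneg_right (abs_nonneg _)) (le_add_of_nonneg_left (abs_nonneg _)))
  have hminsub : ∀ (a b c d : ℝ), |min a b - min c d| ≤ |a - c| + |b - d| := fun a b c d =>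
    (abs_min_sub_min_le_max _ _ _ _).trans
      (max_le (le_add_of_nonneg_right (abs_nonneg _)) (le_add_of_nonneg_left (abs_nonneg _)))
  have hVdiff : ∀ k, MemLpVar p Ω (fun x => V k x - u₁ x) := fun k =>
    memLpVar_dom hΩm hpm hp1 (hVlp k) hu₁ ((hVlp k).1.sub hu₁.1) fun x => abs_sub_le' _ _
  have hWdiff : ∀ k, MemLpVar p Ω (fun x => W k x - u₂ x) := fun k =>
    memLpVar_dom hΩm hpm hp1 (hWlp k) hu₂ ((hWlp k).1.sub hu₂.1) fun x => abs_sub_le' _ _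
  have hVt : Tendsto (fun k => luxNorm p Ω (fun x => V k x - u₁ x)) atTop (𝓝 0) :=
    hvA.2.comp hφmono.tendsto_atTop
  have hWt : Tendsto (fun k => luxNorm p Ω (fun x => W k x - u₂ x)) atTop (𝓝 0) :=
    hwA.2.comp hψmono.tendsto_atTop
  have hMXt : LpTendsto p Ω MX (fun x => max (u₁ x) (u₂ x)) := by
    apply lpTendsto_dom hΩm hpm hp1 (F := fun k x => V k x - u₁ x)
      (G := fun k x => W k x - u₂ x)
      (fun k x => hmaxsub _ _ _ _)
      (fun k => (hVlp k).1.sub hu₁.1) (fun k => (hWlp k).1.sub hu₂.1)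
      (fun k => exists_modular_le_one hΩm hpm hp1 (hVdiff k))
      (fun k => exists_modular_le_one hΩm hpm hp1 (hWdiff k))
      hVt hWt
  have hMNt : LpTendsto p Ω MN (fun x => min (u₁ x) (u₂ x)) := by
    apply lpTendsto_dom hΩm hpm hp1 (F := fun k x => V k x - u₁ x)
      (G := fun k x => W k x - u₂ x)
      (fun k x => hminsub _ _ _ _)
      (fun k => (hVlp k).1.sub hu₁.1) (fun k => (hWlp k).1.sub hu₂.1)
      (fun k => exists_modular_le_one hΩm hpm hp1 (hVdiff k))
      (fun k => exists_modular_le_one hΩm hpm hp1 (hWdiff k))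
      hVt hWt
  have hMXA : (∀ k, LocLipOn Ω (MX k) ∧ MemLpVar p Ω (MX k)) ∧
      LpTendsto p Ω MX (fun x => max (u₁ x) (u₂ x)) :=
    ⟨fun k => ⟨locLipOn_max (hVlip k) (hWlip k),
      memLpVar_dom hΩm hpm hp1 (hVlp k) (hWlp k) ((hVlp k).1.max (hWlp k).1)
        fun x => abs_max_le' _ _⟩, hMXt⟩
  have hMNA : (∀ k, LocLipOn Ω (MN k) ∧ MemLpVar p Ω (MN k)) ∧
      LpTendsto p Ω MN (fun x => min (u₁ x) (u₂ x)) :=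
    ⟨fun k => ⟨locLipOn_min (hVlip k) (hWlip k),
      memLpVar_dom hΩm hpm hp1 (hVlp k) (hWlp k) ((hVlp k).1.min (hWlp k).1)
        fun x => abs_min_le' _ _⟩, hMNt⟩
  have hbx : bvModular p Ω (fun x => max (u₁ x) (u₂ x)) ≤
      Filter.liminf (fun k => gradModular p Ω (MX k)) atTop := iInf₂_le MX hMXA
  have hbn : bvModular p Ω (fun x => min (u₁ x) (u₂ x)) ≤
      Filter.liminf (fun k => gradModular p Ω (MN k)) atTop := iInf₂_le MN hMNA
  have hsum : ∀ k, gradModular p Ω (MX k) + gradModular p Ω (MN k) ≤ c₁ + c₂ := fun k =>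
    le_trans (gradModular_max_min hΩ hpm hp1 (hVlip k) (hWlip k))
      (add_le_add (hφ k).le (hψ k).le)
  have hC : c₁ + c₂ ≠ ⊤ := ENNReal.add_ne_top.2 ⟨hc₁t, hc₂t⟩
  calc bvModular p Ω (fun x => max (u₁ x) (u₂ x)) +
        bvModular p Ω (fun x => min (u₁ x) (u₂ x))
      ≤ Filter.liminf (fun k => gradModular p Ω (MX k)) atTop +
        Filter.liminf (fun k => gradModular p Ω (MN k)) atTop := add_le_add hbx hbn
    _ ≤ c₁ + c₂ := liminf_add_le_of_sum_le hC hsum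
    _ = bvModular p Ω u₁ + bvModular p Ω u₂ + (ε : ℝ≥0∞) := by
        rw [hc₁, hc₂, add_add_add_comm, ENNReal.add_halves]

end AuxLemmas3

/-- strong subadditivity of the mixed capacity. -/
theorem bvCapacity_strong_subadditive
    {n : ℕ} (p : Eu n → ℝ) (Ω : Set (Eu n)) (hΩ : IsOpen Ω)
    (hpm : Measurable p) (hp1 : ∀ x ∈ Ω, 1 ≤ p x) (hpb : ∃ M : ℝ, ∀ x ∈ Ω, p x ≤ M)
    (E₁ E₂ : Set (Eu n)) (h₁ : E₁ ⊆ Ω) (h₂ : E₂ ⊆ Ω) :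
    bvCapacity p Ω (E₁ ∪ E₂) + bvCapacity p Ω (E₁ ∩ E₂) ≤
      bvCapacity p Ω E₁ + bvCapacity p Ω E₂ := by
  apply ENNReal.le_of_forall_pos_le_add
  intro ε hε hfin
  have hc1t : bvCapacity p Ω E₁ ≠ ⊤ := ne_top_of_le_ne_top hfin.ne le_self_add
  have hc2t : bvCapacity p Ω E₂ ≠ ⊤ := ne_top_of_le_ne_top hfin.ne le_add_self
  have hεne : ((ε : ℝ≥0∞) / 2) ≠ 0 := by
    simp [ENNReal.div_eq_zero_iff, ENNReal.coe_ne_zero.2 hε.ne']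
  set c₁ := bvCapacity p Ω E₁ + (ε : ℝ≥0∞) / 2 with hc₁
  set c₂ := bvCapacity p Ω E₂ + (ε : ℝ≥0∞) / 2 with hc₂
  have hlt₁ : bvCapacity p Ω E₁ < c₁ := ENNReal.lt_add_right hc1t hεne
  have hlt₂ : bvCapacity p Ω E₂ < c₂ := ENNReal.lt_add_right hc2t hεne
  rw [show bvCapacity p Ω E₁ = ⨅ (u : Eu n → ℝ) (_ : u ∈ admissibleBV p Ω E₁),
      vModular p Ω u + bvModular p Ω u from rfl, iInf_lt_iff] at hlt₁
  obtain ⟨u₁, h1⟩ := hlt₁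
  rw [iInf_lt_iff] at h1
  obtain ⟨hu₁adm, hu₁lt⟩ := h1
  rw [show bvCapacity p Ω E₂ = ⨅ (u : Eu n → ℝ) (_ : u ∈ admissibleBV p Ω E₂),
      vModular p Ω u + bvModular p Ω u from rfl, iInf_lt_iff] at hlt₂
  obtain ⟨u₂, h2⟩ := hlt₂
  rw [iInf_lt_iff] at h2
  obtain ⟨hu₂adm, hu₂lt⟩ := h2
  obtain ⟨⟨hu₁lp, hu₁bv⟩, hu₁bd, U₁, hU₁o, hU₁s, hU₁v⟩ := hu₁adm
  obtain ⟨⟨hu₂lp, hu₂bv⟩, hu₂bd, U₂, hU₂o, hU₂s, hU₂v⟩ := hu₂adm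
  have hΩm := hΩ.measurableSet
  have hmm := bvModular_max_min hΩ hpm hp1 hu₁lp hu₂lp
  have hvm := vModular_max_min (Ω := Ω) hpm hu₁lp.1 hu₂lp.1
  have hmaxlp : MemLpVar p Ω (fun x => max (u₁ x) (u₂ x)) :=
    memLpVar_dom hΩm hpm hp1 hu₁lp hu₂lp (hu₁lp.1.max hu₂lp.1) fun x => abs_max_le' _ _
  have hminlp : MemLpVar p Ω (fun x => min (u₁ x) (u₂ x)) :=
    memLpVar_dom hΩm hpm hp1 hu₁lp hu₂lp (hu₁lp.1.min hu₂lp.1) fun x => abs_min_le' _ _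
  have hbvfin : bvModular p Ω u₁ + bvModular p Ω u₂ < ⊤ :=
    ENNReal.add_lt_top.2 ⟨hu₁bv, hu₂bv⟩
  have hbvmax : bvModular p Ω (fun x => max (u₁ x) (u₂ x)) < ⊤ :=
    lt_of_le_of_lt (le_trans le_self_add hmm) hbvfin
  have hbvmin : bvModular p Ω (fun x => min (u₁ x) (u₂ x)) < ⊤ :=
    lt_of_le_of_lt (le_trans le_add_self hmm) hbvfin
  have hadmmax : (fun x => max (u₁ x) (u₂ x)) ∈ admissibleBV p Ω (E₁ ∪ E₂) := by
    refine ⟨⟨hmaxlp, hbvmax⟩, fun x hx =>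
      ⟨le_trans (hu₁bd x hx).1 (le_max_left _ _), max_le (hu₁bd x hx).2 (hu₂bd x hx).2⟩,
      U₁ ∪ U₂, hU₁o.union hU₂o, Set.union_subset_union hU₁s hU₂s, ?_⟩
    rintro x ⟨hxU, hxΩ⟩
    show max (u₁ x) (u₂ x) = 1
    rcases hxU with hx1 | hx2
    · have hv1 := hU₁v x ⟨hx1, hxΩ⟩
      have h2 : u₂ x ≤ u₁ x := (hu₂bd x hxΩ).2.trans_eq hv1.symm
      rw [max_eq_left h2]; exact hv1
    · have hv2 := hU₂v x ⟨hx2, hxΩ⟩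
      have h1' : u₁ x ≤ u₂ x := (hu₁bd x hxΩ).2.trans_eq hv2.symm
      rw [max_eq_right h1']; exact hv2
  have hadmmin : (fun x => min (u₁ x) (u₂ x)) ∈ admissibleBV p Ω (E₁ ∩ E₂) := by
    refine ⟨⟨hminlp, hbvmin⟩, fun x hx =>
      ⟨le_min (hu₁bd x hx).1 (hu₂bd x hx).1, le_trans (min_le_left _ _) (hu₁bd x hx).2⟩,
      U₁ ∩ U₂, hU₁o.inter hU₂o, Set.inter_subset_inter hU₁s hU₂s, ?_⟩
    rintro x ⟨⟨hx1, hx2⟩, hxΩ⟩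
    show min (u₁ x) (u₂ x) = 1
    rw [hU₁v x ⟨hx1, hxΩ⟩, hU₂v x ⟨hx2, hxΩ⟩]
    exact min_self 1
  have hle1 : bvCapacity p Ω (E₁ ∪ E₂) ≤
      vModular p Ω (fun x => max (u₁ x) (u₂ x)) +
        bvModular p Ω (fun x => max (u₁ x) (u₂ x)) :=
    iInf₂_le _ hadmmax
  have hle2 : bvCapacity p Ω (E₁ ∩ E₂) ≤
      vModular p Ω (fun x => min (u₁ x) (u₂ x)) +
        bvModular p Ω (fun x => min (u₁ x) (u₂ x)) :=
    iInf₂_le _ hadmmin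
  calc bvCapacity p Ω (E₁ ∪ E₂) + bvCapacity p Ω (E₁ ∩ E₂)
      ≤ (vModular p Ω (fun x => max (u₁ x) (u₂ x)) +
          bvModular p Ω (fun x => max (u₁ x) (u₂ x))) +
        (vModular p Ω (fun x => min (u₁ x) (u₂ x)) +
          bvModular p Ω (fun x => min (u₁ x) (u₂ x))) := add_le_add hle1 hle2
    _ = (vModular p Ω (fun x => max (u₁ x) (u₂ x)) +
          vModular p Ω (fun x => min (u₁ x) (u₂ x))) +
        (bvModular p Ω (fun x => max (u₁ x) (u₂ x)) +
          bvModular p Ω (fun x => min (u₁ x) (u₂ x))) := add_add_add_comm _ _ _ _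
    _ ≤ (vModular p Ω u₁ + vModular p Ω u₂) +
        (bvModular p Ω u₁ + bvModular p Ω u₂) := add_le_add (le_of_eq hvm) hmm
    _ = (vModular p Ω u₁ + bvModular p Ω u₁) +
        (vModular p Ω u₂ + bvModular p Ω u₂) := add_add_add_comm _ _ _ _
    _ ≤ c₁ + c₂ := add_le_add hu₁lt.le hu₂lt.le
    _ = bvCapacity p Ω E₁ + bvCapacity p Ω E₂ + (ε : ℝ≥0∞) := by
        rw [hc₁, hc₂, add_add_add_comm, ENNReal.add_halves]
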